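/- Let R be a commutative ring with identity, M a multiplication R-module, and N₁, N₂, N₃ prime submodules of M such that N₁ + N₂ = N₁ + N₃ = N₂ + N₃ = M. Then N₁ ∩ N₂ ∩ N₃ is not a strongly 2-irreducible submodule of M. -/
import Mathlib


def IsStrongly2Irreducible {R M : Type*} [CommRing R] [AddCommGroup M] [Module R M]
    (N : Submodule R M) : Prop :=
  N ≠ ⊤ ∧ ∀ H₁ H₂ H₃ : Submodule R M, H₁ ⊓ H₂ ⊓ H₃ ≤ N →
    H₁ ⊓ H₂ ≤ N ∨ H₁ ⊓ H₃ ≤ N ∨ H₂ ⊓ H₃ ≤ N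

def IsMultiplicationModule (R M : Type*) [CommRing R] [AddCommGroup M] [Module R M] : Prop :=
  ∀ N : Submodule R M, ∃ I : Ideal R, N = I • (⊤ : Submodule R M)

def IsPrimeSubmodule {R M : Type*} [CommRing R] [AddCommGroup M] [Module R M]
    (P : Submodule R M) : Prop :=
  P ≠ ⊤ ∧ ∀ (r : R) (m : M), r • m ∈ P → m ∈ P ∨ r ∈ P.colon ⊤

lemma prime_inf_le {R M : Type*} [CommRing R] [AddCommGroup M] [Module R M]
    (hmul : IsMultiplicationModule R M) {P A B : Submodule R M}
    (hP : IsPrimeSubmodule P) (h : A ⊓ B ≤ P) : A ≤ P ∨ B ≤ P := by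
  by_cases hB : B ≤ P
  · exact Or.inr hB
  · left
    obtain ⟨m, hmB, hmP⟩ := SetLike.not_le_iff_exists.mp hB
    obtain ⟨I, hI⟩ := hmul A
    rw [hI]
    refine Submodule.smul_le.mpr fun i hi x _ => ?_
    have him : i • m ∈ A ⊓ B := by
      refine ⟨?_, B.smul_mem i hmB⟩
      rw [hI]
      exact Submodule.smul_mem_smul hi trivial
    rcases hP.2 i m (h him) with h' | h'
    · exact absurd h' hmP
    · exact Submodule.mem_colon.mp h' x trivial

theorem stmt_9 {R M : Type*} [CommRing R] [AddCommGroup M] [Module R M]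
    (hmul : IsMultiplicationModule R M)
    (N₁ N₂ N₃ : Submodule R M)
    (h₁ : IsPrimeSubmodule N₁) (h₂ : IsPrimeSubmodule N₂) (h₃ : IsPrimeSubmodule N₃)
    (h12 : N₁ ⊔ N₂ = ⊤) (h13 : N₁ ⊔ N₃ = ⊤) (h23 : N₂ ⊔ N₃ = ⊤) :
    ¬ IsStrongly2Irreducible (N₁ ⊓ N₂ ⊓ N₃) := by
  rintro ⟨-, hirr⟩
  have hn13 : ¬ N₁ ≤ N₃ := fun h => h₃.1 (by rw [← h13, sup_eq_right.mpr h])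
  have hn31 : ¬ N₃ ≤ N₁ := fun h => h₁.1 (by rw [← h13, sup_eq_left.mpr h])
  have hn12 : ¬ N₁ ≤ N₂ := fun h => h₂.1 (by rw [← h12, sup_eq_right.mpr h])
  have hn21 : ¬ N₂ ≤ N₁ := fun h => h₁.1 (by rw [← h12, sup_eq_left.mpr h])
  have hn23 : ¬ N₂ ≤ N₃ := fun h => h₃.1 (by rw [← h23, sup_eq_right.mpr h])
  have hn32 : ¬ N₃ ≤ N₂ := fun h => h₂.1 (by rw [← h23, sup_eq_left.mpr h])
  rcases hirr N₁ N₂ N₃ le_rfl with h | h | h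
  · have : N₁ ⊓ N₂ ≤ N₃ := h.trans inf_le_right
    rcases prime_inf_le hmul h₃ this with h' | h' <;> [exact hn13 h'; exact hn23 h']
  · have : N₁ ⊓ N₃ ≤ N₂ := h.trans (inf_le_left.trans inf_le_right)
    rcases prime_inf_le hmul h₂ this with h' | h' <;> [exact hn12 h'; exact hn32 h']
  · have : N₂ ⊓ N₃ ≤ N₁ := h.trans (inf_le_left.trans inf_le_left)
    rcases prime_inf_le hmul h₁ this with h' | h' <;> [exact hn21 h'; exact hn31 h']
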